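/- Randomized exact matching test correctness: let G₀ = (V, E₀) and G₁ = (V, E₁) be simple graphs on the same vertex set V with |V| = n even, let F be a finite field, and choose values r_e ∈ F independently and uniformly at random for each e ∈ E₀ ⊔ E₁. Fix k ∈ {0, 1, …, n/2}. If G = G₀ + G₁ has a perfect matching of weight exactly k, then the probability that the coefficient [y^k] pf T̃(G₀, G₁) ∈ F equals 0 is at most n/|F|; if G has no perfect matching of weight exactly k, then [y^k] pf T̃(G₀, G₁) = 0 with probability 1. -/

import Mathlib

open scoped Classical

/-- The index `2i` (0-based), corresponding to `2i - 1` in 1-based notation. -/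
def evenIdx {m : ℕ} (i : Fin m) : Fin (2 * m) := ⟨2 * i.val, by have := i.isLt; omega⟩

/-- The index `2i + 1` (0-based), corresponding to `2i` in 1-based notation. -/
def oddIdx {m : ℕ} (i : Fin m) : Fin (2 * m) := ⟨2 * i.val + 1, by have := i.isLt; omega⟩

/-- The pfaffian of a `2m × 2m` matrix: the sum over all permutations `σ` of
`{0, …, 2m-1}` satisfying `σ(0) < σ(2) < ⋯ < σ(2m-2)` and `σ(2i) < σ(2i+1)` for each `i`
of `sgn(σ) · Π_i A_{σ(2i), σ(2i+1)}`. -/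
noncomputable def pfaffian {R : Type} [CommRing R] {m : ℕ}
    (A : Matrix (Fin (2 * m)) (Fin (2 * m)) R) : R :=
  ∑ σ ∈ Finset.univ.filter (fun σ : Equiv.Perm (Fin (2 * m)) =>
      (∀ i : Fin m, σ (evenIdx i) < σ (oddIdx i)) ∧
      StrictMono fun i : Fin m => σ (evenIdx i)),
    (Equiv.Perm.sign σ : ℤ) • ∏ i : Fin m, A (σ (evenIdx i)) (σ (oddIdx i))

/-- The Tutte matrix of `G` with the indeterminate `x_e` of each edge `e` replaced by the
field value `r e` (sign according to the order of the endpoints). -/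
noncomputable def tutteVals (F : Type) [Field F] {n : ℕ} (G : SimpleGraph (Fin n))
    (r : G.edgeSet → F) : Matrix (Fin n) (Fin n) F :=
  fun u v =>
    if h : G.Adj u v then
      (if u < v then r ⟨s(u, v), G.mem_edgeSet.mpr h⟩
       else - r ⟨s(u, v), G.mem_edgeSet.mpr h⟩)
    else 0

/-- The substituted weighted Tutte matrix `T̃(G₀, G₁) = T̃(G₀) + y·T̃(G₁) ∈ F[y]^{V×V}`
for the assignment `(r₀, r₁) ∈ F^{E₀ ⊔ E₁}`, with `y = Polynomial.X`. -/
noncomputable def substWeightedTutteMatrix (F : Type) [Field F] {n : ℕ}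
    (G₀ G₁ : SimpleGraph (Fin n)) (r₀ : G₀.edgeSet → F) (r₁ : G₁.edgeSet → F) :
    Matrix (Fin n) (Fin n) (Polynomial F) :=
  (tutteVals F G₀ r₀).map Polynomial.C +
    (Polynomial.X : Polynomial F) • (tutteVals F G₁ r₁).map Polynomial.C

/-- `(M₀, M₁)` is a perfect matching of the disjoint union `G₀ + G₁` of weight `k`:
`M₀` consists of (weight-0) edges of `G₀`, `M₁` of (weight-1) edges of `G₁`, all chosen
edges are pairwise vertex-disjoint, every vertex is covered, and exactly `k` edges come
from `G₁`. -/
def IsPerfectMatchingPairOfWeight {n : ℕ} (G₀ G₁ : SimpleGraph (Fin n))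
    (M₀ M₁ : Finset (Sym2 (Fin n))) (k : ℕ) : Prop :=
  ↑M₀ ⊆ G₀.edgeSet ∧ ↑M₁ ⊆ G₁.edgeSet ∧ Disjoint M₀ M₁ ∧
  ((↑(M₀ ∪ M₁) : Set (Sym2 (Fin n))).Pairwise fun e f => ∀ v, v ∈ e → v ∉ f) ∧
  (∀ v : Fin n, ∃ e ∈ M₀ ∪ M₁, v ∈ e) ∧ M₁.card = k

section Aux
open Finset Polynomial

lemma count_lin {α : Type} [Fintype α] (F : Type) [Field F] [Fintype F] (a : α)
    (g h : (α → F) → F)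
    (hg : ∀ r x, g (Function.update r a x) = g r)
    (hh : ∀ r x, h (Function.update r a x) = h r) :
    (univ.filter (fun r : α → F => g r ≠ 0 ∧ r a * g r + h r = 0)).card
      ≤ Fintype.card F ^ (Fintype.card α - 1) := by
  classical
  have key : (univ.filter (fun r : α → F => g r ≠ 0 ∧ r a * g r + h r = 0)).card
      ≤ (univ : Finset ({x : α // x ≠ a} → F)).card := by
    apply Finset.card_le_card_of_injOn (fun r x => r x.1)
    · intro r _; exact mem_univ _
    · intro r hr r' hr' hrr
      simp only [coe_filter, mem_univ, true_and, Set.mem_setOf_eq] at hr hr'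
      have hupd : r' = Function.update r a (r' a) := by
        funext x
        by_cases hx : x = a
        · subst hx; simp
        · have := congrFun hrr ⟨x, hx⟩
          simpa [Function.update_apply, hx] using this.symm
      have hgg : g r' = g r := by rw [hupd, hg]
      have hhh : h r' = h r := by rw [hupd, hh]
      have hra : r a = r' a := by
        have h1 := hr.2
        have h2 := hr'.2
        rw [hgg, hhh] at h2
        have hz : (r a - r' a) * g r = 0 := by linear_combination h1 - h2
        rcases mul_eq_zero.mp hz with h | h
        · exact sub_eq_zero.mp h
        · exact absurd h hr.1
      funext x
      by_cases hx : x = a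
      · rw [hx]; exact hra
      · exact (congrFun hrr ⟨x, hx⟩)
  calc _ ≤ _ := key
    _ = Fintype.card F ^ (Fintype.card α - 1) := by
        rw [Finset.card_univ, Fintype.card_fun]
        congr 1
        rw [Fintype.card_subtype_compl, Fintype.card_subtype_eq]

lemma sz_allempty {α β : Type} [Fintype α] (F : Type) [Field F] [Fintype F]
    {P : Finset β} {A : β → Finset α} {c : β → F}
    (hinj : Set.InjOn A P) (hc : ∀ p ∈ P, c p ≠ 0)
    (hemp : ∀ p ∈ P, A p = ∅) (p₀ : β) (hp₀ : p₀ ∈ P) :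
    ∀ r : α → F, ∑ p ∈ P, c p * ∏ x ∈ A p, r x ≠ 0 := by
  intro r
  have hPs : P = {p₀} := by
    apply Finset.eq_singleton_iff_unique_mem.mpr
    refine ⟨hp₀, fun p hp => hinj hp hp₀ ?_⟩
    rw [hemp p hp, hemp p₀ hp₀]
  rw [hPs, Finset.sum_singleton, hemp p₀ hp₀]
  simpa using hc p₀ hp₀

lemma sz {α : Type} [Fintype α] (F : Type) [Field F] [Fintype F]
    (d : ℕ) : ∀ {β : Type} (P : Finset β) (A : β → Finset α) (c : β → F),
    P.Nonempty → Set.InjOn A P → (∀ p ∈ P, c p ≠ 0) →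
    (∀ p ∈ P, (A p).card ≤ d) →
    (univ.filter (fun r : α → F => ∑ p ∈ P, c p * ∏ x ∈ A p, r x = 0)).card
        * Fintype.card F
      ≤ d * Fintype.card F ^ Fintype.card α := by
  classical
  induction d with
  | zero =>
    intro β P A c hP hinj hc hd
    obtain ⟨p₀, hp₀⟩ := hP
    have hemp : ∀ p ∈ P, A p = ∅ := fun p hp =>
      Finset.card_eq_zero.mp (Nat.le_zero.mp (hd p hp))
    have := sz_allempty F hinj hc hemp p₀ hp₀
    have : (univ.filter (fun r : α → F => ∑ p ∈ P, c p * ∏ x ∈ A p, r x = 0)) = ∅ := by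
      apply Finset.filter_eq_empty_iff.mpr
      intro r _; exact this r
    simp [this]
  | succ d ih =>
    intro β P A c hP hinj hc hd
    by_cases hemp : ∀ p ∈ P, A p = ∅
    · obtain ⟨p₀, hp₀⟩ := hP
      have := sz_allempty F hinj hc hemp p₀ hp₀
      have hze : (univ.filter (fun r : α → F => ∑ p ∈ P, c p * ∏ x ∈ A p, r x = 0)) = ∅ := by
        apply Finset.filter_eq_empty_iff.mpr
        intro r _; exact this r
      simp [hze]
    · push_neg at hemp
      obtain ⟨p₀, hp₀, hA₀⟩ := hemp
      obtain ⟨a, ha⟩ := hA₀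
      set P' := P.filter (fun p => a ∈ A p) with hP'
      set g : (α → F) → F := fun r => ∑ p ∈ P', c p * ∏ x ∈ (A p).erase a, r x with hgdef
      set h : (α → F) → F := fun r => ∑ p ∈ P.filter (fun p => a ∉ A p), c p * ∏ x ∈ A p, r x
        with hhdef
      clear_value P' g h
      have hsplit : ∀ r : α → F, ∑ p ∈ P, c p * ∏ x ∈ A p, r x = r a * g r + h r := by
        intro r
        simp only [hgdef, hhdef, hP', Finset.mul_sum]
        rw [← Finset.sum_filter_add_sum_filter_not P (fun p => a ∈ A p)]
        congr 1
        apply Finset.sum_congr rfl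
        intro p hp
        rw [Finset.mem_filter] at hp
        rw [← Finset.mul_prod_erase _ _ hp.2]
        ring
      have hgup : ∀ (r : α → F) x, g (Function.update r a x) = g r := by
        intro r x
        simp only [hgdef]
        apply Finset.sum_congr rfl
        intro p _
        congr 1
        apply Finset.prod_congr rfl
        intro y hy
        rw [Function.update_apply, if_neg (Finset.ne_of_mem_erase hy)]
      have hhup : ∀ (r : α → F) x, h (Function.update r a x) = h r := by
        intro r x
        simp only [hhdef]
        apply Finset.sum_congr rfl
        intro p hp
        rw [Finset.mem_filter] at hp
        congr 1
        apply Finset.prod_congr rfl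
        intro y hy
        rw [Function.update_apply, if_neg]
        rintro rfl
        exact hp.2 hy
      -- split the count
      have hsub : (univ.filter (fun r : α → F => ∑ p ∈ P, c p * ∏ x ∈ A p, r x = 0))
          ⊆ (univ.filter (fun r : α → F => g r ≠ 0 ∧ r a * g r + h r = 0))
            ∪ (univ.filter (fun r : α → F => g r = 0)) := by
        intro r hr
        rw [Finset.mem_filter] at hr
        rw [hsplit] at hr
        by_cases hg : g r = 0
        · exact Finset.mem_union_right _ (Finset.mem_filter.mpr ⟨Finset.mem_univ _, hg⟩)
        · exact Finset.mem_union_left _ (Finset.mem_filter.mpr ⟨Finset.mem_univ _, hg, hr.2⟩)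
      have hc1 : (univ.filter (fun r : α → F => g r ≠ 0 ∧ r a * g r + h r = 0)).card
          ≤ Fintype.card F ^ (Fintype.card α - 1) := count_lin F a g h hgup hhup
      have hc2 : (univ.filter (fun r : α → F => g r = 0)).card * Fintype.card F
          ≤ d * Fintype.card F ^ Fintype.card α := by
        simp only [hgdef]
        apply ih P' (fun p => (A p).erase a) c
        · exact ⟨p₀, by rw [hP']; exact Finset.mem_filter.mpr ⟨hp₀, ha⟩⟩
        · intro p hp q hq hpq
          simp only [hP', Finset.coe_filter, Set.mem_setOf_eq] at hp hq
          dsimp only at hpq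
          apply hinj hp.1 hq.1
          rw [← Finset.insert_erase hp.2, ← Finset.insert_erase hq.2, hpq]
        · intro p hp
          rw [hP'] at hp
          exact hc p (Finset.mem_filter.mp hp).1
        · intro p hp
          rw [hP', Finset.mem_filter] at hp
          have h1 := hd p hp.1
          have h2 := Finset.card_erase_of_mem hp.2
          show ((A p).erase a).card ≤ d
          rw [h2]
          simpa using Nat.sub_le_sub_right h1 1
      have hcardpos : 0 < Fintype.card α := Fintype.card_pos_iff.mpr ⟨a⟩
      calc (univ.filter (fun r : α → F => ∑ p ∈ P, c p * ∏ x ∈ A p, r x = 0)).card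
            * Fintype.card F
          ≤ ((univ.filter (fun r : α → F => g r ≠ 0 ∧ r a * g r + h r = 0)).card
              + (univ.filter (fun r : α → F => g r = 0)).card) * Fintype.card F := by
            exact mul_le_mul_left ((Finset.card_le_card hsub).trans (Finset.card_union_le _ _)) _
        _ = (univ.filter (fun r : α → F => g r ≠ 0 ∧ r a * g r + h r = 0)).card
              * Fintype.card F
            + (univ.filter (fun r : α → F => g r = 0)).card * Fintype.card F := by ring
        _ ≤ Fintype.card F ^ (Fintype.card α - 1) * Fintype.card F
            + d * Fintype.card F ^ Fintype.card α := by
            exact Nat.add_le_add (mul_le_mul_left hc1 _) hc2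
        _ = (d + 1) * Fintype.card F ^ Fintype.card α := by
            have h1 : Fintype.card α - 1 + 1 = Fintype.card α :=
              Nat.succ_pred_eq_of_pos hcardpos
            calc Fintype.card F ^ (Fintype.card α - 1) * Fintype.card F
                  + d * Fintype.card F ^ Fintype.card α
                = Fintype.card F ^ (Fintype.card α - 1 + 1)
                  + d * Fintype.card F ^ Fintype.card α := by rw [pow_succ]
              _ = (d + 1) * Fintype.card F ^ Fintype.card α := by rw [h1]; ring

section Idx
variable {m : ℕ}

lemma evenIdx_lt_oddIdx (i : Fin m) : evenIdx i < oddIdx i := by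
  simp [evenIdx, oddIdx, Fin.lt_def]

lemma evenIdx_ne_oddIdx (i j : Fin m) : evenIdx i ≠ oddIdx j := by
  simp only [evenIdx, oddIdx, Fin.ne_iff_vne]
  omega

lemma evenIdx_inj {i j : Fin m} (h : evenIdx i = evenIdx j) : i = j := by
  simp only [evenIdx, Fin.mk.injEq] at h
  exact Fin.ext (by omega)

lemma oddIdx_inj {i j : Fin m} (h : oddIdx i = oddIdx j) : i = j := by
  simp only [oddIdx, Fin.mk.injEq] at h
  exact Fin.ext (by omega)

lemma idx_cases (j : Fin (2 * m)) : (∃ i, j = evenIdx i) ∨ (∃ i, j = oddIdx i) := by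
  have hj := j.isLt
  rcases Nat.even_or_odd j.val with ⟨c, hc⟩ | ⟨c, hc⟩
  · exact Or.inl ⟨⟨c, by omega⟩, by simp [evenIdx, Fin.ext_iff]; omega⟩
  · exact Or.inr ⟨⟨c, by omega⟩, by simp [oddIdx, Fin.ext_iff]; omega⟩

/-- distinct indices yield distinct (in fact disjoint) pairs -/
lemma pair_inj (σ : Equiv.Perm (Fin (2 * m))) {i j : Fin m}
    (h : s(σ (evenIdx i), σ (oddIdx i)) = s(σ (evenIdx j), σ (oddIdx j))) : i = j := by
  rw [Sym2.eq_iff] at h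
  rcases h with ⟨h1, _⟩ | ⟨h1, h2⟩
  · exact evenIdx_inj (σ.injective h1)
  · exact absurd (σ.injective h1) (evenIdx_ne_oddIdx i j)

lemma canonical_unique (σ σ' : Equiv.Perm (Fin (2 * m)))
    (h1 : ∀ i : Fin m, σ (evenIdx i) < σ (oddIdx i))
    (h2 : StrictMono fun i : Fin m => σ (evenIdx i))
    (h1' : ∀ i : Fin m, σ' (evenIdx i) < σ' (oddIdx i))
    (h2' : StrictMono fun i : Fin m => σ' (evenIdx i))
    (hp : ∀ i : Fin m, ∃ j : Fin m,
      s(σ (evenIdx i), σ (oddIdx i)) = s(σ' (evenIdx j), σ' (oddIdx j))) :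
    σ = σ' := by
  set P1 : Finset (Sym2 (Fin (2 * m))) :=
    univ.image (fun i : Fin m => s(σ (evenIdx i), σ (oddIdx i))) with hP1
  set P2 : Finset (Sym2 (Fin (2 * m))) :=
    univ.image (fun i : Fin m => s(σ' (evenIdx i), σ' (oddIdx i))) with hP2
  have hsub : P1 ⊆ P2 := by
    intro e he
    rw [hP1, Finset.mem_image] at he
    obtain ⟨i, _, rfl⟩ := he
    obtain ⟨j, hj⟩ := hp i
    rw [hP2, Finset.mem_image]
    exact ⟨j, mem_univ _, hj.symm⟩
  have hcard1 : P1.card = m := by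
    rw [hP1, Finset.card_image_of_injective _ (fun i j hij => pair_inj σ hij), card_univ,
      Fintype.card_fin]
  have hcard2 : P2.card = m := by
    rw [hP2, Finset.card_image_of_injective _ (fun i j hij => pair_inj σ' hij), card_univ,
      Fintype.card_fin]
  have hPeq : P1 = P2 := Finset.eq_of_subset_of_card_le hsub (by omega)
  -- pair transfer both ways, uncrossed
  have key : ∀ i : Fin m, ∃ j : Fin m, σ (evenIdx i) = σ' (evenIdx j) ∧
      σ (oddIdx i) = σ' (oddIdx j) := by
    intro i
    obtain ⟨j, hj⟩ := hp i
    rw [Sym2.eq_iff] at hj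
    rcases hj with ⟨ha, hb⟩ | ⟨ha, hb⟩
    · exact ⟨j, ha, hb⟩
    · exfalso
      have hx := h1' j
      rw [← ha, ← hb] at hx
      exact absurd (hx.trans (h1 i)) (lt_irrefl _)
  have key' : ∀ j : Fin m, ∃ i : Fin m, σ (evenIdx i) = σ' (evenIdx j) ∧
      σ (oddIdx i) = σ' (oddIdx j) := by
    intro j
    have : s(σ' (evenIdx j), σ' (oddIdx j)) ∈ P1 := by
      rw [hPeq, hP2, Finset.mem_image]; exact ⟨j, mem_univ _, rfl⟩
    rw [hP1, Finset.mem_image] at this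
    obtain ⟨i, _, hi⟩ := this
    rw [Sym2.eq_iff] at hi
    rcases hi with ⟨ha, hb⟩ | ⟨ha, hb⟩
    · exact ⟨i, ha, hb⟩
    · exfalso
      have hx := h1 i
      rw [ha, hb] at hx
      exact absurd (hx.trans (h1' j)) (lt_irrefl _)
  -- the even parts coincide via orderEmbOfFin uniqueness
  have hs : ∀ j : Fin m, σ' (evenIdx j) ∈ univ.image (fun i : Fin m => σ (evenIdx i)) := by
    intro j
    obtain ⟨i, hi, _⟩ := key' j
    exact Finset.mem_image.mpr ⟨i, mem_univ _, hi⟩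
  have hs' : ∀ j : Fin m, σ (evenIdx j) ∈ univ.image (fun i : Fin m => σ (evenIdx i)) :=
    fun j => Finset.mem_image.mpr ⟨j, mem_univ _, rfl⟩
  have hcards : (univ.image (fun i : Fin m => σ (evenIdx i))).card = m := by
    rw [Finset.card_image_of_injective _ h2.injective, card_univ, Fintype.card_fin]
  have he1 := Finset.orderEmbOfFin_unique hcards (f := fun i : Fin m => σ (evenIdx i)) hs' h2
  have he2 := Finset.orderEmbOfFin_unique hcards (f := fun j : Fin m => σ' (evenIdx j)) hs h2'
  have heven : ∀ i : Fin m, σ (evenIdx i) = σ' (evenIdx i) := by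
    intro i
    rw [congrFun he1 i, congrFun he2 i]
  have hodd : ∀ i : Fin m, σ (oddIdx i) = σ' (oddIdx i) := by
    intro i
    obtain ⟨j, hj1, hj2⟩ := key i
    rw [← heven j] at hj1
    have : i = j := h2.injective hj1
    rw [hj2, this]
  apply Equiv.ext
  intro j
  rcases idx_cases j with ⟨i, rfl⟩ | ⟨i, rfl⟩
  · exact heven i
  · exact hodd i
end Idx

section Exist
variable {m : ℕ}

lemma exists_canonical (M : Finset (Sym2 (Fin (2 * m))))
    (hnd : ∀ e ∈ M, ¬ e.IsDiag)
    (hpw : (↑M : Set (Sym2 (Fin (2 * m)))).Pairwise fun e f => ∀ v, v ∈ e → v ∉ f)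
    (hcov : ∀ v : Fin (2 * m), ∃ e ∈ M, v ∈ e) :
    ∃ σ : Equiv.Perm (Fin (2 * m)),
      ((∀ i : Fin m, σ (evenIdx i) < σ (oddIdx i)) ∧
        StrictMono fun i : Fin m => σ (evenIdx i)) ∧
      (∀ i : Fin m, s(σ (evenIdx i), σ (oddIdx i)) ∈ M) ∧
      (∀ e ∈ M, ∃ i : Fin m, e = s(σ (evenIdx i), σ (oddIdx i))) := by
  classical
  -- the partner function
  have hex : ∀ v : Fin (2 * m), ∃ w, s(v, w) ∈ M := by
    intro v
    obtain ⟨e, he, hv⟩ := hcov v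
    obtain ⟨w, rfl⟩ := Sym2.mem_iff_exists.mp hv
    exact ⟨w, he⟩
  set f : Fin (2 * m) → Fin (2 * m) := fun v => Classical.choose (hex v) with hf
  have hfM : ∀ v, s(v, f v) ∈ M := fun v => Classical.choose_spec (hex v)
  have hfne : ∀ v, f v ≠ v := by
    intro v h
    have := hfM v
    rw [h] at this
    exact hnd _ this (by simp)
  have huniq : ∀ v w, s(v, w) ∈ M → w = f v := by
    intro v w hw
    have h2 := hfM v
    have heq : s(v, w) = s(v, f v) := by
      by_contra hne
      exact (hpw (by exact_mod_cast hw) (by exact_mod_cast h2) hne) v (by simp) (by simp)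
    have hwv : w ≠ v := by
      rintro rfl
      exact hnd _ hw (by simp)
    rcases Sym2.eq_iff.mp heq with ⟨_, h⟩ | ⟨h, h'⟩
    · exact h
    · exact absurd h.symm (hfne v)
  have hinv : ∀ v, f (f v) = v := by
    intro v
    have : s(f v, v) ∈ M := by rw [Sym2.eq_swap]; exact hfM v
    exact (huniq (f v) v this).symm
  have hfinj : Function.Injective f := by
    intro a b hab
    have := hinv a
    rw [hab, hinv] at this
    exact this.symm
  -- the set of minima
  set mins : Finset (Fin (2 * m)) := univ.filter (fun v => v < f v) with hmins
  have hcardmins : mins.card = m := by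
    have hsplit : (univ : Finset (Fin (2 * m))) =
        mins ∪ univ.filter (fun v => f v < v) := by
      apply Finset.ext
      intro v
      simp only [hmins, Finset.mem_union, Finset.mem_filter, mem_univ, true_and]
      refine ⟨fun _ => ?_, fun _ => trivial⟩
      rcases lt_or_gt_of_ne (hfne v).symm with h | h
      · exact Or.inl h
      · exact Or.inr h
    have hdisj : Disjoint mins (univ.filter (fun v => f v < v)) := by
      rw [Finset.disjoint_left]
      intro v hv hv'
      rw [hmins, Finset.mem_filter] at hv
      rw [Finset.mem_filter] at hv'
      exact absurd (hv.2.trans hv'.2) (lt_irrefl v)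
    have hcards : (univ.filter (fun v => f v < v)).card = mins.card := by
      apply Finset.card_bij (fun v _ => f v)
      · intro v hv
        rw [Finset.mem_filter] at hv
        rw [hmins, Finset.mem_filter]
        refine ⟨mem_univ _, ?_⟩
        rw [hinv]
        exact hv.2
      · intro a _ b _ hab
        exact hfinj hab
      · intro w hw
        rw [hmins, Finset.mem_filter] at hw
        refine ⟨f w, ?_, hinv w⟩
        rw [Finset.mem_filter]
        refine ⟨mem_univ _, ?_⟩
        rw [hinv]
        exact hw.2
    have htot : (univ : Finset (Fin (2 * m))).card = 2 * m := by
      rw [card_univ, Fintype.card_fin]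
    rw [hsplit, Finset.card_union_of_disjoint hdisj, hcards] at htot
    omega
  -- order the minima
  set ord : Fin m ↪o Fin (2 * m) := mins.orderEmbOfFin hcardmins with hord
  have hordmem : ∀ i, ord i ∈ mins := fun i => mins.orderEmbOfFin_mem hcardmins i
  have hordlt : ∀ i, ord i < f (ord i) := by
    intro i
    have := hordmem i
    rw [hmins, Finset.mem_filter] at this
    exact this.2
  -- the permutation
  have hhalf : ∀ j : Fin (2 * m), j.val / 2 < m := fun j => by have := j.isLt; omega
  set σf : Fin (2 * m) → Fin (2 * m) := fun j =>
    if Even j.val then ord ⟨j.val / 2, hhalf j⟩ else f (ord ⟨j.val / 2, hhalf j⟩) with hσf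
  have hσeven : ∀ i : Fin m, σf (evenIdx i) = ord i := by
    intro i
    rw [hσf]
    beta_reduce
    rw [if_pos (show Even (evenIdx i).val from ⟨i.val, by show 2 * i.val = i.val + i.val; omega⟩)]
    congr 1
    exact Fin.ext (by show 2 * i.val / 2 = i.val; omega)
  have hσodd : ∀ i : Fin m, σf (oddIdx i) = f (ord i) := by
    intro i
    rw [hσf]
    beta_reduce
    rw [if_neg (show ¬ Even (oddIdx i).val by rintro ⟨c, hc⟩; change 2 * i.val + 1 = c + c at hc; omega)]
    congr 2
    exact Fin.ext (by show (2 * i.val + 1) / 2 = i.val; omega)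
  have hnotmins : ∀ v, v ∈ mins → f v ∉ mins := by
    intro v hv hfv
    rw [hmins, Finset.mem_filter] at hv hfv
    rw [hinv] at hfv
    exact absurd (hv.2.trans hfv.2) (lt_irrefl v)
  have hσinj : Function.Injective σf := by
    intro a b hab
    rcases idx_cases a with ⟨i, rfl⟩ | ⟨i, rfl⟩ <;> rcases idx_cases b with ⟨j, rfl⟩ | ⟨j, rfl⟩
    · rw [hσeven, hσeven] at hab
      exact congrArg evenIdx (ord.injective hab)
    · rw [hσeven, hσodd] at hab
      exact absurd (hab ▸ hordmem i) (hnotmins _ (hordmem j))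
    · rw [hσodd, hσeven] at hab
      exact absurd (hab ▸ hordmem j) (hnotmins _ (hordmem i))
    · rw [hσodd, hσodd] at hab
      exact congrArg oddIdx (ord.injective (hfinj hab))
  set σ : Equiv.Perm (Fin (2 * m)) := Equiv.ofBijective σf
    (Finite.injective_iff_bijective.mp hσinj) with hσ
  have hσapp : ∀ j, σ j = σf j := fun j => rfl
  refine ⟨σ, ⟨⟨fun i => ?_, fun i j hij => ?_⟩, fun i => ?_, fun e he => ?_⟩⟩
  · rw [hσapp, hσapp, hσeven, hσodd]
    exact hordlt i
  · show σ (evenIdx i) < σ (evenIdx j)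
    rw [hσapp, hσapp, hσeven, hσeven]
    exact ord.strictMono hij
  · rw [hσapp, hσapp, hσeven, hσodd]
    exact hfM (ord i)
  · -- surjectivity onto M
    induction e with
    | _ a b =>
      have hab : a ≠ b := fun h => hnd _ he (by rw [h]; simp)
      -- wlog a < b
      rcases lt_or_gt_of_ne hab with hlt | hlt
      · have hb : b = f a := huniq a b he
        have ha : a ∈ mins := by
          rw [hmins, Finset.mem_filter]
          exact ⟨mem_univ _, hb ▸ hlt⟩
        have hr : a ∈ Set.range (mins.orderEmbOfFin hcardmins) := by
          rw [Finset.range_orderEmbOfFin]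
          exact_mod_cast ha
        obtain ⟨i, hi⟩ := hr
        have hi' : ord i = a := hi
        refine ⟨i, ?_⟩
        rw [hσapp, hσapp, hσeven, hσodd, hi', ← hb]
      · have ha : a = f b := huniq b a (Sym2.eq_swap ▸ he)
        have hb : b ∈ mins := by
          rw [hmins, Finset.mem_filter]
          exact ⟨mem_univ _, ha ▸ hlt⟩
        have hr : b ∈ Set.range (mins.orderEmbOfFin hcardmins) := by
          rw [Finset.range_orderEmbOfFin]
          exact_mod_cast hb
        obtain ⟨i, hi⟩ := hr
        have hi' : ord i = b := hi
        refine ⟨i, ?_⟩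
        rw [hσapp, hσapp, hσeven, hσodd, hi', ha]
        exact Sym2.eq_swap
end Exist

lemma coeff_prod_linear {F : Type} [Field F] {m : ℕ} (a b : Fin m → F) (k : ℕ) :
    (∏ i : Fin m, (C (a i) + X * C (b i))).coeff k
      = ∑ S ∈ Finset.powersetCard k (univ : Finset (Fin m)),
          (∏ i ∈ S, b i) * ∏ i ∈ univ \ S, a i := by
  have hterm : ∀ S : Finset (Fin m),
      (∏ i ∈ S, (X * C (b i))) * ∏ i ∈ univ \ S, C (a i)
        = Polynomial.monomial S.card ((∏ i ∈ S, b i) * ∏ i ∈ univ \ S, a i) := by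
    intro S
    rw [Finset.prod_mul_distrib, Finset.prod_const, ← map_prod, ← map_prod, mul_assoc,
      ← map_mul, mul_comm (X ^ S.card), Polynomial.C_mul_X_pow_eq_monomial]
  rw [show (fun i : Fin m => C (a i) + X * C (b i))
      = (fun i : Fin m => X * C (b i) + C (a i)) from funext fun i => add_comm _ _]
  rw [Finset.prod_add, Polynomial.finset_sum_coeff, Finset.powersetCard_eq_filter,
    Finset.sum_filter]
  apply Finset.sum_congr rfl
  intro S _
  rw [hterm S, Polynomial.coeff_monomial]

section Struct
variable {m : ℕ}

noncomputable def Sigset (m : ℕ) : Finset (Equiv.Perm (Fin (2 * m))) :=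
  Finset.univ.filter (fun σ : Equiv.Perm (Fin (2 * m)) =>
    (∀ i : Fin m, σ (evenIdx i) < σ (oddIdx i)) ∧
    StrictMono fun i : Fin m => σ (evenIdx i))

def pairEdge (σ : Equiv.Perm (Fin (2 * m))) (i : Fin m) : Sym2 (Fin (2 * m)) :=
  s(σ (evenIdx i), σ (oddIdx i))

variable (G₀ G₁ : SimpleGraph (Fin (2 * m)))

noncomputable def Dset (k : ℕ) : Finset (Equiv.Perm (Fin (2 * m)) × Finset (Fin m)) :=
  (Sigset m ×ˢ Finset.powersetCard k Finset.univ).filter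
    (fun p => (∀ i ∈ p.2, pairEdge p.1 i ∈ G₁.edgeSet) ∧
      ∀ i ∉ p.2, pairEdge p.1 i ∈ G₀.edgeSet)

noncomputable def Aset (p : Equiv.Perm (Fin (2 * m)) × Finset (Fin m)) :
    Finset (↥G₀.edgeSet ⊕ ↥G₁.edgeSet) :=
  Finset.univ.filter (fun x => Sum.elim
    (fun e : ↥G₀.edgeSet => ∃ i, i ∉ p.2 ∧ (e : Sym2 (Fin (2 * m))) = pairEdge p.1 i)
    (fun e : ↥G₁.edgeSet => ∃ i, i ∈ p.2 ∧ (e : Sym2 (Fin (2 * m))) = pairEdge p.1 i) x)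

noncomputable def ccoef (F : Type) [Field F] {m : ℕ}
    (p : Equiv.Perm (Fin (2 * m)) × Finset (Fin m)) : F :=
  ((Equiv.Perm.sign p.1 : ℤ) : F)

lemma ccoef_ne_zero (F : Type) [Field F] (p : Equiv.Perm (Fin (2 * m)) × Finset (Fin m)) :
    ccoef F p ≠ 0 := by
  rw [ccoef]
  rcases Int.units_eq_one_or (Equiv.Perm.sign p.1) with h | h <;> rw [h] <;> simp

lemma Aset_eq (p : Equiv.Perm (Fin (2 * m)) × Finset (Fin m))
    (h₁ : ∀ i ∈ p.2, pairEdge p.1 i ∈ G₁.edgeSet)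
    (h₀ : ∀ i ∉ p.2, pairEdge p.1 i ∈ G₀.edgeSet) :
    Aset G₀ G₁ p =
      (p.2.attach.image (fun i => Sum.inr
        (⟨pairEdge p.1 i.1, h₁ i.1 i.2⟩ : ↥G₁.edgeSet)))
      ∪ ((Finset.univ \ p.2).attach.image (fun i => Sum.inl
        (⟨pairEdge p.1 i.1, h₀ i.1 (Finset.mem_sdiff.mp i.2).2⟩ : ↥G₀.edgeSet))) := by
  apply Finset.ext
  intro x
  rw [Aset, Finset.mem_filter, Finset.mem_union]
  constructor
  · rintro ⟨-, hx⟩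
    rcases x with e | e
    · simp only [Sum.elim_inl] at hx
      obtain ⟨i, hi, he⟩ := hx
      right
      rw [Finset.mem_image]
      refine ⟨⟨i, Finset.mem_sdiff.mpr ⟨Finset.mem_univ _, hi⟩⟩, Finset.mem_attach _ _, ?_⟩
      congr 1
      exact Subtype.ext he.symm
    · simp only [Sum.elim_inr] at hx
      obtain ⟨i, hi, he⟩ := hx
      left
      rw [Finset.mem_image]
      refine ⟨⟨i, hi⟩, Finset.mem_attach _ _, ?_⟩
      congr 1
      exact Subtype.ext he.symm
  · intro hx
    refine ⟨Finset.mem_univ _, ?_⟩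
    rcases hx with hx | hx
    · rw [Finset.mem_image] at hx
      obtain ⟨i, -, rfl⟩ := hx
      simp only [Sum.elim_inr]
      exact ⟨i.1, i.2, rfl⟩
    · rw [Finset.mem_image] at hx
      obtain ⟨i, -, rfl⟩ := hx
      simp only [Sum.elim_inl]
      exact ⟨i.1, (Finset.mem_sdiff.mp i.2).2, rfl⟩

lemma Aset_card (p : Equiv.Perm (Fin (2 * m)) × Finset (Fin m)) {k : ℕ}
    (hp : p ∈ Dset G₀ G₁ k) : (Aset G₀ G₁ p).card = m := by
  rw [Dset, Finset.mem_filter] at hp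
  obtain ⟨-, h₁, h₀⟩ := hp
  rw [Aset_eq G₀ G₁ p h₁ h₀]
  have hdisj : Disjoint
      (p.2.attach.image (fun i => Sum.inr
        (⟨pairEdge p.1 i.1, h₁ i.1 i.2⟩ : ↥G₁.edgeSet)))
      ((Finset.univ \ p.2).attach.image (fun i => Sum.inl
        (⟨pairEdge p.1 i.1, h₀ i.1 (Finset.mem_sdiff.mp i.2).2⟩ : ↥G₀.edgeSet))) := by
    rw [Finset.disjoint_left]
    intro x hx hx'
    rw [Finset.mem_image] at hx hx'
    obtain ⟨i, -, rfl⟩ := hx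
    obtain ⟨j, -, hj⟩ := hx'
    exact Sum.inl_ne_inr hj
  rw [Finset.card_union_of_disjoint hdisj, Finset.card_image_of_injOn,
    Finset.card_image_of_injOn, Finset.card_attach, Finset.card_attach,
    Finset.card_sdiff_of_subset (Finset.subset_univ _), Finset.card_univ, Fintype.card_fin]
  · have h3 : p.2.card ≤ m := by simpa using Finset.card_le_univ p.2
    omega
  · intro a _ b _ hab
    have := Sum.inl_injective hab
    have h2 : pairEdge p.1 a.1 = pairEdge p.1 b.1 := congrArg Subtype.val this
    exact Subtype.ext (pair_inj p.1 h2)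
  · intro a _ b _ hab
    have := Sum.inr_injective hab
    have h2 : pairEdge p.1 a.1 = pairEdge p.1 b.1 := congrArg Subtype.val this
    exact Subtype.ext (pair_inj p.1 h2)

lemma tutteVals_apply (F : Type) [Field F] {n : ℕ} (G : SimpleGraph (Fin n))
    (r : ↥G.edgeSet → F) {u v : Fin n} (h : s(u, v) ∈ G.edgeSet) (hlt : u < v) :
    tutteVals F G r u v = r ⟨s(u, v), h⟩ := by
  simp only [tutteVals, dif_pos (G.mem_edgeSet.mp h), if_pos hlt]

lemma tutteVals_not_adj (F : Type) [Field F] {n : ℕ} (G : SimpleGraph (Fin n))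
    (r : ↥G.edgeSet → F) {u v : Fin n} (h : ¬ G.Adj u v) :
    tutteVals F G r u v = 0 := by
  simp only [tutteVals, dif_neg h]

lemma sigset_mem {σ : Equiv.Perm (Fin (2 * m))} (hσ : σ ∈ Sigset m) :
    (∀ i : Fin m, σ (evenIdx i) < σ (oddIdx i)) ∧
      StrictMono fun i : Fin m => σ (evenIdx i) := by
  rw [Sigset, Finset.mem_filter] at hσ
  exact hσ.2

lemma coeff_pfaffian_eq (F : Type) [Field F] (k : ℕ)
    (rr : ↥G₀.edgeSet ⊕ ↥G₁.edgeSet → F) :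
    (pfaffian (substWeightedTutteMatrix F G₀ G₁
        (fun e => rr (Sum.inl e)) (fun e => rr (Sum.inr e)))).coeff k
      = ∑ p ∈ Dset G₀ G₁ k, ccoef F p * ∏ x ∈ Aset G₀ G₁ p, rr x := by
  classical
  set r₀ : ↥G₀.edgeSet → F := fun e => rr (Sum.inl e) with hr₀
  set r₁ : ↥G₁.edgeSet → F := fun e => rr (Sum.inr e) with hr₁
  have hentry : ∀ u v, substWeightedTutteMatrix F G₀ G₁ r₀ r₁ u v
      = C (tutteVals F G₀ r₀ u v) + X * C (tutteVals F G₁ r₁ u v) := by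
    intro u v
    simp [substWeightedTutteMatrix, Matrix.add_apply, Matrix.smul_apply, Matrix.map_apply,
      smul_eq_mul]
  have step1 : (pfaffian (substWeightedTutteMatrix F G₀ G₁ r₀ r₁)).coeff k
      = ∑ σ ∈ Sigset m, ∑ S ∈ Finset.powersetCard k (Finset.univ : Finset (Fin m)),
          (Equiv.Perm.sign σ : ℤ) •
            ((∏ i ∈ S, tutteVals F G₁ r₁ (σ (evenIdx i)) (σ (oddIdx i))) *
             ∏ i ∈ Finset.univ \ S, tutteVals F G₀ r₀ (σ (evenIdx i)) (σ (oddIdx i))) := by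
    rw [pfaffian, Polynomial.finset_sum_coeff]
    rw [Sigset]
    apply Finset.sum_congr rfl
    intro σ hσ
    rw [Polynomial.coeff_smul]
    rw [show (∏ i : Fin m,
          substWeightedTutteMatrix F G₀ G₁ r₀ r₁ (σ (evenIdx i)) (σ (oddIdx i)))
        = ∏ i : Fin m, (C (tutteVals F G₀ r₀ (σ (evenIdx i)) (σ (oddIdx i)))
            + X * C (tutteVals F G₁ r₁ (σ (evenIdx i)) (σ (oddIdx i))))
      from Finset.prod_congr rfl fun i _ => hentry _ _]
    rw [coeff_prod_linear, Finset.smul_sum]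
  rw [step1, ← Finset.sum_product']
  have step2 : ∀ p ∈ (Sigset m ×ˢ Finset.powersetCard k (Finset.univ : Finset (Fin m))),
      ((Equiv.Perm.sign p.1 : ℤ) •
        ((∏ i ∈ p.2, tutteVals F G₁ r₁ (p.1 (evenIdx i)) (p.1 (oddIdx i))) *
         ∏ i ∈ Finset.univ \ p.2, tutteVals F G₀ r₀ (p.1 (evenIdx i)) (p.1 (oddIdx i)))) ≠ 0
      → ((∀ i ∈ p.2, pairEdge p.1 i ∈ G₁.edgeSet) ∧
          ∀ i ∉ p.2, pairEdge p.1 i ∈ G₀.edgeSet) := by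
    intro p _ hne
    by_contra hcon
    apply hne
    push_neg at hcon
    by_cases hc1 : ∀ i ∈ p.2, pairEdge p.1 i ∈ G₁.edgeSet
    · obtain ⟨i, hi, hadj⟩ := hcon hc1
      rw [pairEdge, SimpleGraph.mem_edgeSet] at hadj
      rw [Finset.prod_eq_zero (Finset.mem_sdiff.mpr ⟨Finset.mem_univ _, hi⟩)
        (tutteVals_not_adj F G₀ r₀ hadj)]
      simp
    · push_neg at hc1
      obtain ⟨i, hi, hadj⟩ := hc1
      rw [pairEdge, SimpleGraph.mem_edgeSet] at hadj
      rw [Finset.prod_eq_zero hi (tutteVals_not_adj F G₁ r₁ hadj)]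
      simp
  rw [← Finset.sum_filter_of_ne step2]
  rw [show ((Sigset m ×ˢ Finset.powersetCard k (Finset.univ : Finset (Fin m))).filter
      (fun p => (∀ i ∈ p.2, pairEdge p.1 i ∈ G₁.edgeSet) ∧
        ∀ i ∉ p.2, pairEdge p.1 i ∈ G₀.edgeSet)) = Dset G₀ G₁ k from rfl]
  apply Finset.sum_congr rfl
  intro p hp
  have hpd := hp
  rw [Dset, Finset.mem_filter] at hpd
  obtain ⟨hprod, h₁, h₀⟩ := hpd
  have hσ := (Finset.mem_product.mp hprod).1
  have hlt := (sigset_mem hσ).1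
  -- rewrite products
  have hP1 : (∏ i ∈ p.2, tutteVals F G₁ r₁ (p.1 (evenIdx i)) (p.1 (oddIdx i)))
      = ∏ i ∈ p.2.attach, rr (Sum.inr (⟨pairEdge p.1 i.1, h₁ i.1 i.2⟩ : ↥G₁.edgeSet)) := by
    rw [← Finset.prod_attach]
    apply Finset.prod_congr rfl
    intro i _
    exact tutteVals_apply F G₁ r₁ (h₁ i.1 i.2) (hlt i.1)
  have hP0 : (∏ i ∈ Finset.univ \ p.2,
        tutteVals F G₀ r₀ (p.1 (evenIdx i)) (p.1 (oddIdx i)))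
      = ∏ i ∈ (Finset.univ \ p.2).attach, rr (Sum.inl
          (⟨pairEdge p.1 i.1, h₀ i.1 (Finset.mem_sdiff.mp i.2).2⟩ : ↥G₀.edgeSet)) := by
    rw [← Finset.prod_attach]
    apply Finset.prod_congr rfl
    intro i _
    exact tutteVals_apply F G₀ r₀ (h₀ i.1 (Finset.mem_sdiff.mp i.2).2) (hlt i.1)
  have hdisj : Disjoint
      (p.2.attach.image (fun i => Sum.inr
        (⟨pairEdge p.1 i.1, h₁ i.1 i.2⟩ : ↥G₁.edgeSet)))
      ((Finset.univ \ p.2).attach.image (fun i => Sum.inl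
        (⟨pairEdge p.1 i.1, h₀ i.1 (Finset.mem_sdiff.mp i.2).2⟩ : ↥G₀.edgeSet))) := by
    rw [Finset.disjoint_left]
    intro x hx hx'
    rw [Finset.mem_image] at hx hx'
    obtain ⟨i, -, rfl⟩ := hx
    obtain ⟨j, -, hj⟩ := hx'
    exact Sum.inl_ne_inr hj
  have hAprod : (∏ x ∈ Aset G₀ G₁ p, rr x)
      = (∏ i ∈ p.2.attach, rr (Sum.inr (⟨pairEdge p.1 i.1, h₁ i.1 i.2⟩ : ↥G₁.edgeSet)))
        * ∏ i ∈ (Finset.univ \ p.2).attach, rr (Sum.inl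
            (⟨pairEdge p.1 i.1, h₀ i.1 (Finset.mem_sdiff.mp i.2).2⟩ : ↥G₀.edgeSet)) := by
    rw [Aset_eq G₀ G₁ p h₁ h₀, Finset.prod_union hdisj]
    congr 1
    · apply Finset.prod_image
      intro a _ b _ hab
      have h2 : pairEdge p.1 a.1 = pairEdge p.1 b.1 :=
        congrArg Subtype.val (Sum.inr_injective hab)
      exact Subtype.ext (pair_inj p.1 h2)
    · apply Finset.prod_image
      intro a _ b _ hab
      have h2 : pairEdge p.1 a.1 = pairEdge p.1 b.1 :=
        congrArg Subtype.val (Sum.inl_injective hab)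
      exact Subtype.ext (pair_inj p.1 h2)
  rw [hP1, hP0, hAprod, ccoef, zsmul_eq_mul]

lemma pairEdge_mem_union (p : Equiv.Perm (Fin (2 * m)) × Finset (Fin m)) :
    ((Finset.univ \ p.2).image (pairEdge p.1)) ∪ (p.2.image (pairEdge p.1))
      = Finset.univ.image (pairEdge p.1) := by
  rw [← Finset.image_union]
  congr 1
  rw [Finset.sdiff_union_self_eq_union]
  simp

lemma mem_pairEdge_cases {σ : Equiv.Perm (Fin (2 * m))} {v : Fin (2 * m)} {i : Fin m}
    (hv : v ∈ pairEdge σ i) : v = σ (evenIdx i) ∨ v = σ (oddIdx i) :=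
  Sym2.mem_iff.mp hv

lemma Dset_to_matching {k : ℕ} (p : Equiv.Perm (Fin (2 * m)) × Finset (Fin m))
    (hp : p ∈ Dset G₀ G₁ k) :
    ∃ M₀ M₁, IsPerfectMatchingPairOfWeight G₀ G₁ M₀ M₁ k := by
  classical
  rw [Dset, Finset.mem_filter] at hp
  obtain ⟨hprod, h₁, h₀⟩ := hp
  have hS : p.2.card = k := Finset.mem_powersetCard_univ.mp (Finset.mem_product.mp hprod).2
  refine ⟨(Finset.univ \ p.2).image (pairEdge p.1), p.2.image (pairEdge p.1), ?_, ?_, ?_, ?_, ?_, ?_⟩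
  · intro e he
    rw [Finset.coe_image] at he
    obtain ⟨i, hi, rfl⟩ := he
    exact h₀ i (Finset.mem_sdiff.mp hi).2
  · intro e he
    rw [Finset.coe_image] at he
    obtain ⟨i, hi, rfl⟩ := he
    exact h₁ i hi
  · rw [Finset.disjoint_left]
    intro e he he'
    rw [Finset.mem_image] at he he'
    obtain ⟨i, hi, rfl⟩ := he
    obtain ⟨j, hj, hj'⟩ := he'
    rw [pair_inj p.1 hj'] at hj
    exact (Finset.mem_sdiff.mp hi).2 hj
  · rw [pairEdge_mem_union]
    intro e he f hf hne v hve hvf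
    rw [Finset.coe_image] at he hf
    obtain ⟨i, -, rfl⟩ := he
    obtain ⟨j, -, rfl⟩ := hf
    have hij : i ≠ j := fun h => hne (by rw [h])
    rcases mem_pairEdge_cases hve with h | h <;> rcases mem_pairEdge_cases hvf with h' | h'
    · exact hij (evenIdx_inj (p.1.injective (h ▸ h')))
    · exact evenIdx_ne_oddIdx i j (p.1.injective (h ▸ h'))
    · exact evenIdx_ne_oddIdx j i (p.1.injective (h' ▸ h))
    · exact hij (oddIdx_inj (p.1.injective (h ▸ h')))
  · intro v
    rw [pairEdge_mem_union]
    rcases idx_cases (p.1.symm v) with ⟨i, hi⟩ | ⟨i, hi⟩ <;>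
      refine ⟨pairEdge p.1 i, Finset.mem_image.mpr ⟨i, Finset.mem_univ _, rfl⟩, ?_⟩ <;>
      rw [pairEdge, Sym2.mem_iff]
    · exact Or.inl (by rw [← hi, Equiv.apply_symm_apply])
    · exact Or.inr (by rw [← hi, Equiv.apply_symm_apply])
  · rw [← hS]
    exact Finset.card_image_of_injOn (fun a _ b _ h => pair_inj p.1 h)

lemma matching_to_Dset {k : ℕ} {M₀ M₁ : Finset (Sym2 (Fin (2 * m)))}
    (h : IsPerfectMatchingPairOfWeight G₀ G₁ M₀ M₁ k) :
    (Dset G₀ G₁ k).Nonempty := by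
  classical
  obtain ⟨hM₀, hM₁, hdisj, hpw, hcov, hcard⟩ := h
  set M := M₀ ∪ M₁ with hM
  have hMsub : ∀ e ∈ M, e ∈ G₀.edgeSet ∨ e ∈ G₁.edgeSet := by
    intro e he
    rcases Finset.mem_union.mp he with he | he
    · exact Or.inl (hM₀ he)
    · exact Or.inr (hM₁ he)
  have hnd : ∀ e ∈ M, ¬ e.IsDiag := by
    intro e he
    rcases hMsub e he with h' | h'
    · exact G₀.not_isDiag_of_mem_edgeSet h'
    · exact G₁.not_isDiag_of_mem_edgeSet h'
  obtain ⟨σ, ⟨hσ1, hσ2⟩, hσM, hMσ⟩ := exists_canonical M hnd hpw hcov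
  set S : Finset (Fin m) := Finset.univ.filter (fun i => pairEdge σ i ∈ M₁) with hSdef
  have hσSig : σ ∈ Sigset m := by
    rw [Sigset, Finset.mem_filter]
    exact ⟨Finset.mem_univ _, hσ1, hσ2⟩
  have hScard : S.card = k := by
    rw [← hcard]
    apply Finset.card_bij (fun i _ => pairEdge σ i)
    · intro i hi
      exact (Finset.mem_filter.mp hi).2
    · intro a _ b _ hab
      exact pair_inj σ hab
    · intro e he
      obtain ⟨i, hi⟩ := hMσ e (Finset.mem_union_right _ he)
      refine ⟨i, ?_, hi.symm⟩
      rw [hSdef, Finset.mem_filter]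
      exact ⟨Finset.mem_univ _, by rw [pairEdge, ← hi]; exact he⟩
  refine ⟨(σ, S), ?_⟩
  rw [Dset, Finset.mem_filter, Finset.mem_product]
  refine ⟨⟨hσSig, Finset.mem_powersetCard_univ.mpr hScard⟩, ?_, ?_⟩
  · intro i hi
    exact hM₁ (Finset.mem_filter.mp hi).2
  · intro i hi
    have hmem : pairEdge σ i ∈ M := hσM i
    rcases Finset.mem_union.mp hmem with h' | h'
    · exact hM₀ h'
    · have hiS : i ∈ S := Finset.mem_filter.mpr ⟨Finset.mem_univ i, h'⟩
      exact absurd hiS hi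

lemma Aset_injOn (k : ℕ) : Set.InjOn (Aset G₀ G₁) (Dset G₀ G₁ k) := by
  classical
  intro p hp q hq hA
  rw [Finset.mem_coe, Dset, Finset.mem_filter] at hp hq
  obtain ⟨hprodp, h₁p, h₀p⟩ := hp
  obtain ⟨hprodq, h₁q, h₀q⟩ := hq
  have hσp := sigset_mem (Finset.mem_product.mp hprodp).1
  have hσq := sigset_mem (Finset.mem_product.mp hprodq).1
  have hmem1 : ∀ i ∈ p.2, ∃ j, j ∈ q.2 ∧ pairEdge p.1 i = pairEdge q.1 j := by
    intro i hi
    have hx : (Sum.inr ⟨pairEdge p.1 i, h₁p i hi⟩ : ↥G₀.edgeSet ⊕ ↥G₁.edgeSet)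
        ∈ Aset G₀ G₁ p := by
      rw [Aset, Finset.mem_filter]
      exact ⟨Finset.mem_univ _, ⟨i, hi, rfl⟩⟩
    rw [hA, Aset, Finset.mem_filter] at hx
    obtain ⟨-, j, hj, he⟩ := hx
    exact ⟨j, hj, he⟩
  have hmem0 : ∀ i ∉ p.2, ∃ j, j ∉ q.2 ∧ pairEdge p.1 i = pairEdge q.1 j := by
    intro i hi
    have hx : (Sum.inl ⟨pairEdge p.1 i, h₀p i hi⟩ : ↥G₀.edgeSet ⊕ ↥G₁.edgeSet)
        ∈ Aset G₀ G₁ p := by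
      rw [Aset, Finset.mem_filter]
      exact ⟨Finset.mem_univ _, ⟨i, hi, rfl⟩⟩
    rw [hA, Aset, Finset.mem_filter] at hx
    obtain ⟨-, j, hj, he⟩ := hx
    exact ⟨j, hj, he⟩
  have hpair : ∀ i : Fin m, ∃ j : Fin m, pairEdge p.1 i = pairEdge q.1 j := by
    intro i
    by_cases hi : i ∈ p.2
    · obtain ⟨j, -, he⟩ := hmem1 i hi
      exact ⟨j, he⟩
    · obtain ⟨j, -, he⟩ := hmem0 i hi
      exact ⟨j, he⟩
  have hσeq : p.1 = q.1 :=
    canonical_unique p.1 q.1 hσp.1 hσp.2 hσq.1 hσq.2 hpair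
  have hSsub : p.2 ⊆ q.2 := by
    intro i hi
    obtain ⟨j, hj, he⟩ := hmem1 i hi
    rw [hσeq] at he
    rwa [pair_inj q.1 he]
  have hSsub' : ∀ i, i ∉ p.2 → i ∉ q.2 := by
    intro i hi
    obtain ⟨j, hj, he⟩ := hmem0 i hi
    rw [hσeq] at he
    rwa [pair_inj q.1 he]
  have hSeq : p.2 = q.2 := by
    apply Finset.ext
    intro i
    constructor
    · exact fun hi => hSsub hi
    · intro hi
      by_contra hip
      exact hSsub' i hip hi
  exact Prod.ext hσeq hSeq

end Struct

end Aux

set_option maxHeartbeats 2000000 in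
/-- Randomized exact matching test correctness: choosing the values `r_e ∈ F`
independently and uniformly at random (i.e., `(r₀, r₁)` uniform in `F^{E₀ ⊔ E₁}`), for a
fixed `k ∈ {0, …, n/2}` (`n = 2m`): if `G = G₀ + G₁` has a perfect matching of weight
exactly `k` then `Pr([y^k] pf T̃(G₀, G₁) = 0) ≤ n/|F|`, and if it has none then
`[y^k] pf T̃(G₀, G₁) = 0` always. -/


theorem randomized_exact_matching_test (F : Type) [Field F] [Fintype F] (m : ℕ)
    (hm : 0 < m) (G₀ G₁ : SimpleGraph (Fin (2 * m)))
    [DecidableRel G₀.Adj] [DecidableRel G₁.Adj] (k : ℕ) (hk : k ≤ m) :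
    ((∃ M₀ M₁, IsPerfectMatchingPairOfWeight G₀ G₁ M₀ M₁ k) →
      ((Finset.univ.filter
          (fun r : (G₀.edgeSet → F) × (G₁.edgeSet → F) =>
            (pfaffian (substWeightedTutteMatrix F G₀ G₁ r.1 r.2)).coeff k = 0)).card : ℝ) /
          (Fintype.card ((G₀.edgeSet → F) × (G₁.edgeSet → F)) : ℝ) ≤
        ((2 * m : ℕ) : ℝ) / (Fintype.card F : ℝ)) ∧
    ((¬ ∃ M₀ M₁, IsPerfectMatchingPairOfWeight G₀ G₁ M₀ M₁ k) →
      ∀ r₀ : G₀.edgeSet → F, ∀ r₁ : G₁.edgeSet → F,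
        (pfaffian (substWeightedTutteMatrix F G₀ G₁ r₀ r₁)).coeff k = 0) := by
  constructor
  · rintro ⟨M₀, M₁, hM⟩
    have hcount : (Finset.univ.filter
          (fun r : (↥G₀.edgeSet → F) × (↥G₁.edgeSet → F) =>
            (pfaffian (substWeightedTutteMatrix F G₀ G₁ r.1 r.2)).coeff k = 0)).card
        = (Finset.univ.filter (fun rr : (↥G₀.edgeSet ⊕ ↥G₁.edgeSet) → F =>
            (pfaffian (substWeightedTutteMatrix F G₀ G₁
              (fun e => rr (Sum.inl e)) (fun e => rr (Sum.inr e)))).coeff k = 0)).card := by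
      apply Finset.card_bij (fun r _ => Sum.elim r.1 r.2)
      · intro r hr
        rw [Finset.mem_filter] at hr ⊢
        exact ⟨Finset.mem_univ _, hr.2⟩
      · intro a ha b hb hab
        have h1 : a.1 = b.1 := funext fun e => congrFun hab (Sum.inl e)
        have h2 : a.2 = b.2 := funext fun e => congrFun hab (Sum.inr e)
        exact Prod.ext h1 h2
      · intro rr hrr
        rw [Finset.mem_filter] at hrr
        refine ⟨(fun e => rr (Sum.inl e), fun e => rr (Sum.inr e)), ?_, ?_⟩
        · rw [Finset.mem_filter]
          exact ⟨Finset.mem_univ _, hrr.2⟩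
        · funext x
          cases x <;> rfl
    have hpred : (Finset.univ.filter (fun rr : (↥G₀.edgeSet ⊕ ↥G₁.edgeSet) → F =>
          (pfaffian (substWeightedTutteMatrix F G₀ G₁
            (fun e => rr (Sum.inl e)) (fun e => rr (Sum.inr e)))).coeff k = 0))
        = (Finset.univ.filter (fun rr : (↥G₀.edgeSet ⊕ ↥G₁.edgeSet) → F =>
            ∑ p ∈ Dset G₀ G₁ k, ccoef F p * ∏ x ∈ Aset G₀ G₁ p, rr x = 0)) := by
      apply Finset.filter_congr
      intro rr _
      rw [coeff_pfaffian_eq G₀ G₁ F k rr]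
    have hAcard : ∀ p ∈ Dset G₀ G₁ k, (Aset G₀ G₁ p).card ≤ 2 * m := by
      intro p hp
      rw [Aset_card G₀ G₁ p hp, two_mul]
      exact Nat.le_add_left m m
    have hsz := sz F (2 * m) (Dset G₀ G₁ k) (Aset G₀ G₁) (ccoef F)
        (matching_to_Dset G₀ G₁ hM) (Aset_injOn G₀ G₁ k)
        (fun p _ => ccoef_ne_zero F p) hAcard
    rw [hcount, hpred]
    have hprodcard : Fintype.card ((↥G₀.edgeSet → F) × (↥G₁.edgeSet → F))
        = Fintype.card F ^ Fintype.card (↥G₀.edgeSet ⊕ ↥G₁.edgeSet) := by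
      rw [Fintype.card_prod, Fintype.card_fun, Fintype.card_fun, ← pow_add,
        Fintype.card_sum, add_comm]
    have hF0 : (0 : ℝ) < (Fintype.card F : ℝ) := by
      exact_mod_cast Fintype.card_pos
    have hP0 : (0 : ℝ) < (Fintype.card ((↥G₀.edgeSet → F) × (↥G₁.edgeSet → F)) : ℝ) := by
      exact_mod_cast Fintype.card_pos
    rw [div_le_div_iff₀ hP0 hF0]
    have hineq : (Finset.univ.filter (fun rr : (↥G₀.edgeSet ⊕ ↥G₁.edgeSet) → F =>
          ∑ p ∈ Dset G₀ G₁ k, ccoef F p * ∏ x ∈ Aset G₀ G₁ p, rr x = 0)).card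
            * Fintype.card F
        ≤ 2 * m * Fintype.card ((↥G₀.edgeSet → F) × (↥G₁.edgeSet → F)) := by
      rw [hprodcard]
      convert hsz using 2
      congr!
    exact_mod_cast hineq
  · intro hno r₀ r₁
    have hD : Dset G₀ G₁ k = ∅ := by
      by_contra hne
      obtain ⟨p, hp⟩ := Finset.nonempty_of_ne_empty hne
      exact hno (Dset_to_matching G₀ G₁ p hp)
    have := coeff_pfaffian_eq G₀ G₁ F k (Sum.elim r₀ r₁)
    rw [hD, Finset.sum_empty] at this
    exact this
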